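/- There is a function F assigning to each linear order r on ℕ a linear order F r on ℕ such that (i) for every r, the linear order F r is symmetrically indivisible, and (ii) for all r, s, if F r is order isomorphic to F s then r is order isomorphic to s. In particular there are 2^ℵ0 pairwise non-isomorphic symmetrically indivisible countably infinite linear orders. -/

import Mathlib

/-- A relational embedding is symmetric if every automorphism of the source pushes
forward along it to an automorphism of the target. -/
def IsSymmetricRelEmb {α β : Type*} {r : α → α → Prop} {s : β → β → Prop}
    (e : r ↪r s) : Prop :=
  ∀ g : r ≃r r, ∃ g' : s ≃r s, ∀ x, g' (e x) = e (g x)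

/-- A linear order (given as a relation) is symmetrically indivisible if every
2-coloring admits a monochromatic symmetric self-embedding. -/
def SymIndivRel {α : Type*} (r : α → α → Prop) : Prop :=
  ∀ c : α → Bool, ∃ e : r ↪r r, IsSymmetricRelEmb e ∧ ∀ x y, c (e x) = c (e y)

namespace SymIndivProof

abbrev PP : Type := ℕ × ℚ × ℕ

/-- block sizes: injective in `(a, q)` and positive -/
def sz (a : ℕ) (q : ℚ) : ℕ := Nat.pair a (Encodable.encode q) + 1

lemma sz_pos (a : ℕ) (q : ℚ) : 0 < sz a q := Nat.succ_pos _

lemma sz_injective {a b : ℕ} {q p : ℚ} (h : sz a q = sz b p) : a = b ∧ q = p := by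
  have h' : Nat.pair a (Encodable.encode q) = Nat.pair b (Encodable.encode p) := by
    simpa [sz] using h
  obtain ⟨h1, h2⟩ := Nat.pair_eq_pair.mp h'
  exact ⟨h1, Encodable.encode_injective h2⟩

def rlt (r : ℕ → ℕ → Prop) (a b : ℕ) : Prop := r a b ∧ a ≠ b

def slt (r : ℕ → ℕ → Prop) (x y : PP) : Prop :=
  rlt r x.1 y.1 ∨ (x.1 = y.1 ∧ (x.2.1 < y.2.1 ∨ (x.2.1 = y.2.1 ∧ x.2.2 < y.2.2)))

def leP (r : ℕ → ℕ → Prop) (x y : PP) : Prop := x = y ∨ slt r x y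

section basic

variable {r : ℕ → ℕ → Prop}

lemma r_refl (hr : IsLinearOrder ℕ r) (a : ℕ) : r a a :=
  hr.toIsPartialOrder.toIsPreorder.toRefl.refl a
lemma r_trans (hr : IsLinearOrder ℕ r) {a b c : ℕ} : r a b → r b c → r a c :=
  fun h1 h2 => hr.toIsPartialOrder.toIsPreorder.toIsTrans.trans a b c h1 h2
lemma r_antisymm (hr : IsLinearOrder ℕ r) {a b : ℕ} : r a b → r b a → a = b :=
  fun h1 h2 => hr.toIsPartialOrder.toAntisymm.antisymm a b h1 h2
lemma r_total (hr : IsLinearOrder ℕ r) (a b : ℕ) : r a b ∨ r b a := hr.toTotal.total a b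

lemma rlt_asymm (hr : IsLinearOrder ℕ r) {a b : ℕ} (h1 : rlt r a b) (h2 : rlt r b a) : False :=
  h1.2 (r_antisymm hr h1.1 h2.1)

lemma rlt_trans (hr : IsLinearOrder ℕ r) {a b c : ℕ} (h1 : rlt r a b) (h2 : rlt r b c) :
    rlt r a c := by
  refine ⟨r_trans hr h1.1 h2.1, fun hac => ?_⟩
  subst hac
  exact h2.2 (r_antisymm hr h2.1 h1.1)

lemma rlt_trichot (hr : IsLinearOrder ℕ r) (a b : ℕ) : a = b ∨ rlt r a b ∨ rlt r b a := by
  by_cases hab : a = b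
  · exact Or.inl hab
  · rcases r_total hr a b with h | h
    · exact Or.inr (Or.inl ⟨h, hab⟩)
    · exact Or.inr (Or.inr ⟨h, Ne.symm hab⟩)

lemma slt_irrefl (x : PP) : ¬ slt r x x := by
  rintro (⟨-, h⟩ | ⟨-, (h | ⟨-, h⟩)⟩)
  · exact h rfl
  · exact lt_irrefl _ h
  · exact lt_irrefl _ h

lemma slt_asymm (hr : IsLinearOrder ℕ r) {x y : PP} (h1 : slt r x y) (h2 : slt r y x) : False := by
  rcases h1 with h1 | ⟨e1, h1⟩
  · rcases h2 with h2 | ⟨e2, h2⟩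
    · exact rlt_asymm hr h1 h2
    · exact h1.2 e2.symm
  · rcases h2 with h2 | ⟨e2, h2⟩
    · exact h2.2 e1.symm
    · rcases h1 with h1 | ⟨f1, h1⟩ <;> rcases h2 with h2 | ⟨f2, h2⟩
      · exact absurd (h1.trans h2) (lt_irrefl _)
      · exact absurd h1 (f2 ▸ lt_irrefl _)
      · exact absurd h2 (f1 ▸ lt_irrefl _)
      · exact absurd (h1.trans h2) (lt_irrefl _)

lemma slt_trans (hr : IsLinearOrder ℕ r) {x y z : PP} (h1 : slt r x y) (h2 : slt r y z) :
    slt r x z := by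
  rcases h1 with h1 | ⟨e1, h1⟩
  · rcases h2 with h2 | ⟨e2, h2⟩
    · exact Or.inl (rlt_trans hr h1 h2)
    · exact Or.inl (e2 ▸ h1)
  · rcases h2 with h2 | ⟨e2, h2⟩
    · exact Or.inl (e1 ▸ h2)
    · refine Or.inr ⟨e1.trans e2, ?_⟩
      rcases h1 with h1 | ⟨f1, h1⟩ <;> rcases h2 with h2 | ⟨f2, h2⟩
      · exact Or.inl (h1.trans h2)
      · exact Or.inl (f2 ▸ h1)
      · exact Or.inl (f1 ▸ h2)
      · exact Or.inr ⟨f1.trans f2, h1.trans h2⟩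

lemma slt_trichot (hr : IsLinearOrder ℕ r) (x y : PP) : x = y ∨ slt r x y ∨ slt r y x := by
  obtain ⟨a, q, i⟩ := x
  obtain ⟨b, p, j⟩ := y
  rcases rlt_trichot hr a b with hab | hab | hab
  · subst hab
    rcases lt_trichotomy q p with hqp | hqp | hqp
    · exact Or.inr (Or.inl (Or.inr ⟨rfl, Or.inl hqp⟩))
    · subst hqp
      rcases lt_trichotomy i j with hij | hij | hij
      · exact Or.inr (Or.inl (Or.inr ⟨rfl, Or.inr ⟨rfl, hij⟩⟩))
      · subst hij; exact Or.inl rfl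
      · exact Or.inr (Or.inr (Or.inr ⟨rfl, Or.inr ⟨rfl, hij⟩⟩))
    · exact Or.inr (Or.inr (Or.inr ⟨rfl, Or.inl hqp⟩))
  · exact Or.inr (Or.inl (Or.inl hab))
  · exact Or.inr (Or.inr (Or.inl hab))

lemma leP_refl (x : PP) : leP r x x := Or.inl rfl

lemma leP_trans (hr : IsLinearOrder ℕ r) {x y z : PP} (h1 : leP r x y) (h2 : leP r y z) :
    leP r x z := by
  rcases h1 with rfl | h1
  · exact h2
  · rcases h2 with rfl | h2
    · exact Or.inr h1
    · exact Or.inr (slt_trans hr h1 h2)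

lemma leP_antisymm (hr : IsLinearOrder ℕ r) {x y : PP} (h1 : leP r x y) (h2 : leP r y x) :
    x = y := by
  rcases h1 with rfl | h1
  · rfl
  · rcases h2 with rfl | h2
    · rfl
    · exact absurd h2 (fun h => slt_asymm hr h1 h)

lemma leP_total (hr : IsLinearOrder ℕ r) (x y : PP) : leP r x y ∨ leP r y x := by
  rcases slt_trichot hr x y with rfl | h | h
  · exact Or.inl (leP_refl x)
  · exact Or.inl (Or.inr h)
  · exact Or.inr (Or.inr h)

lemma slt_of_leP_ne {x y : PP} (h : leP r x y) (hne : x ≠ y) : slt r x y := by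
  rcases h with rfl | h
  · exact absurd rfl hne
  · exact h

lemma ne_of_slt {x y : PP} (h : slt r x y) : x ≠ y := by
  rintro rfl; exact slt_irrefl x h

end basic


/-! ### The carrier -/

abbrev CC : Type := {x : PP // x.2.2 < sz x.1 x.2.1}

instance : Infinite CC :=
  Infinite.of_injective (fun a : ℕ => (⟨(a, 0, 0), sz_pos a 0⟩ : CC)) (by
    intro a b h
    have := congrArg (fun z : CC => z.val.1) h
    simpa using this)

noncomputable def eC : ℕ ≃ CC := by
  have h := nonempty_denumerable CC
  letI := Classical.choice h
  exact (Denumerable.eqv CC).symm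

/-! ### Blocks -/

def sb (x y : CC) : Prop := x.val.1 = y.val.1 ∧ x.val.2.1 = y.val.2.1

lemma sb_refl (x : CC) : sb x x := ⟨rfl, rfl⟩
lemma sb_symm {x y : CC} (h : sb x y) : sb y x := ⟨h.1.symm, h.2.symm⟩

def blockEquiv (x : CC) : {z : CC // sb z x} ≃ Fin (sz x.val.1 x.val.2.1) where
  toFun z := ⟨z.val.val.2.2, by
    have hlt := z.val.prop
    rw [z.prop.1, z.prop.2] at hlt
    exact hlt⟩
  invFun i := ⟨⟨(x.val.1, x.val.2.1, i.val), i.isLt⟩, ⟨rfl, rfl⟩⟩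
  left_inv z := by
    apply Subtype.ext
    apply Subtype.ext
    show (x.val.1, x.val.2.1, z.val.val.2.2) = z.val.val
    exact Prod.ext_iff.mpr ⟨z.prop.1.symm, Prod.ext_iff.mpr ⟨z.prop.2.symm, rfl⟩⟩
  right_inv i := rfl

lemma block_finite (x : CC) : ({z : CC | sb z x}).Finite := by
  have : Finite {z : CC // sb z x} := Finite.of_equiv _ (blockEquiv x).symm
  exact Set.finite_coe_iff.mp this

lemma block_ncard (x : CC) : ({z : CC | sb z x}).ncard = sz x.val.1 x.val.2.1 := by
  rw [← Nat.card_coe_set_eq]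
  have h := Nat.card_congr (blockEquiv x)
  exact h.trans (by simp)

/-! ### Between-sets -/

def btwS (r : ℕ → ℕ → Prop) (x y : CC) : Set CC :=
  {z : CC | slt r x.val z.val ∧ slt r z.val y.val}

lemma btw_subset_block {r : ℕ → ℕ → Prop} (hr : IsLinearOrder ℕ r) {x y : CC} (hxy : sb x y) :
    btwS r x y ⊆ {z : CC | sb z x} := by
  rintro z ⟨h1, h2⟩
  rcases h1 with h1 | ⟨e1, l1⟩
  · rcases h2 with h2 | ⟨e2, l2⟩
    · rw [← hxy.1] at h2
      exact absurd rfl (rlt_trans hr h1 h2).2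
    · rw [← hxy.1] at e2
      exact absurd e2.symm h1.2
  · rcases h2 with h2 | ⟨e2, l2⟩
    · rw [← hxy.1, ← e1] at h2
      exact absurd rfl h2.2
    · have hq : z.val.2.1 = x.val.2.1 := by
        rcases l1 with l1 | ⟨f1, _⟩
        · rcases l2 with l2 | ⟨f2, _⟩
          · rw [← hxy.2] at l2
            exact absurd (l1.trans l2) (lt_irrefl _)
          · rw [← hxy.2] at f2
            rw [f2] at l1
            exact absurd l1 (lt_irrefl _)
        · exact f1.symm
      exact ⟨e1.symm, hq⟩

lemma btw_finite {r : ℕ → ℕ → Prop} (hr : IsLinearOrder ℕ r) {x y : CC} (hxy : sb x y) :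
    (btwS r x y).Finite :=
  (block_finite x).subset (btw_subset_block hr hxy)

lemma btw_infinite {r : ℕ → ℕ → Prop} (hr : IsLinearOrder ℕ r) {x y : CC}
    (h : slt r x.val y.val) (hne : ¬ sb x y) : (btwS r x y).Infinite := by
  have gdef : ∀ t : ℚ, (( (x.val.1, t, 0) : PP).2.2 < sz x.val.1 t) := fun t => sz_pos _ _
  set g : ℚ → CC := fun t => ⟨(x.val.1, t, 0), sz_pos _ _⟩ with hg
  have hinj : ∀ s : Set ℚ, Set.InjOn g s := by
    intro s t1 _ t2 _ he
    have := congrArg (fun z : CC => z.val.2.1) he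
    simpa [hg] using this
  rcases h with h | ⟨e, l⟩
  · have hIoi : (Set.Ioi x.val.2.1).Infinite := Set.Ioi_infinite _
    refine (hIoi.image (hinj _)).mono ?_
    rintro w ⟨t, ht, rfl⟩
    constructor
    · exact Or.inr ⟨rfl, Or.inl ht⟩
    · exact Or.inl h
  · have hq : x.val.2.1 < y.val.2.1 := by
      rcases l with l | ⟨f, _⟩
      · exact l
      · exact absurd ⟨e, f⟩ hne
    have hIoo : (Set.Ioo x.val.2.1 y.val.2.1).Infinite := Set.Ioo_infinite hq
    refine (hIoo.image (hinj _)).mono ?_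
    rintro w ⟨t, ht, rfl⟩
    constructor
    · exact Or.inr ⟨rfl, Or.inl ht.1⟩
    · exact Or.inr ⟨e, Or.inl ht.2⟩


/-! ### Transfer along isomorphisms -/

section transfer

variable {r s : ℕ → ℕ → Prop}

lemma le_apply_fin {N : ℕ} {f : Fin N → Fin N} (hm : StrictMono f) :
    ∀ i : Fin N, i.val ≤ (f i).val := by
  have H : ∀ n : ℕ, ∀ i : Fin N, i.val ≤ n → i.val ≤ (f i).val := by
    intro n
    induction n with
    | zero => intro i hi; omega
    | succ n ih =>
      intro i hi
      rcases Nat.lt_or_ge i.val (n + 1) with hlt | hge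
      · exact ih i (Nat.lt_succ_iff.mp hlt)
      · have hiv : i.val = n + 1 := le_antisymm hi hge
        have hNn : n < N := by have := i.isLt; omega
        have hjlt : (⟨n, hNn⟩ : Fin N) < i := by
          rw [Fin.lt_def, hiv]; exact Nat.lt_succ_self n
        have h2 : (f ⟨n, hNn⟩).val < (f i).val := hm hjlt
        have h1 : n ≤ (f ⟨n, hNn⟩).val := ih ⟨n, hNn⟩ (le_refl n)
        omega
  exact fun i => H i.val i le_rfl

lemma hslt_of_hiff (hr : IsLinearOrder ℕ r) (hs : IsLinearOrder ℕ s) (h : CC ≃ CC)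
    (hiff : ∀ x y : CC, leP r x.val y.val ↔ leP s (h x).val (h y).val) :
    ∀ x y : CC, slt r x.val y.val ↔ slt s (h x).val (h y).val := by
  intro x y
  constructor
  · intro hx
    apply slt_of_leP_ne ((hiff x y).mp (Or.inr hx))
    intro he
    have hxy : x = y := h.injective (Subtype.ext he)
    exact ne_of_slt hx (by rw [hxy])
  · intro hx
    apply slt_of_leP_ne ((hiff x y).mpr (Or.inr hx))
    intro he
    have : (h x).val = (h y).val := by rw [Subtype.ext he]
    exact ne_of_slt hx this

lemma hiff_symm (h : CC ≃ CC)
    (hiff : ∀ x y : CC, leP r x.val y.val ↔ leP s (h x).val (h y).val) :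
    ∀ x y : CC, leP s x.val y.val ↔ leP r (h.symm x).val (h.symm y).val := by
  intro x y
  have := hiff (h.symm x) (h.symm y)
  rw [h.apply_symm_apply, h.apply_symm_apply] at this
  exact this.symm

lemma sb_image (hr : IsLinearOrder ℕ r) (hs : IsLinearOrder ℕ s) (h : CC ≃ CC)
    (hiff : ∀ x y : CC, leP r x.val y.val ↔ leP s (h x).val (h y).val)
    {x y : CC} (hxy : sb x y) : sb (h x) (h y) := by
  have hslt := hslt_of_hiff hr hs h hiff
  have himg : ∀ x y : CC, h '' (btwS r x y) = btwS s (h x) (h y) := by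
    intro x y
    ext w
    constructor
    · rintro ⟨z, ⟨hz1, hz2⟩, rfl⟩
      exact ⟨(hslt x z).mp hz1, (hslt z y).mp hz2⟩
    · rintro ⟨hw1, hw2⟩
      refine ⟨h.symm w, ⟨?_, ?_⟩, h.apply_symm_apply w⟩
      · exact (hslt x (h.symm w)).mpr (by rwa [h.apply_symm_apply])
      · exact (hslt (h.symm w) y).mpr (by rwa [h.apply_symm_apply])
  by_contra hne
  rcases slt_trichot hs (h x).val (h y).val with he | hlt | hlt
  · exact hne (by rw [show h x = h y from Subtype.ext he]; exact sb_refl _)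
  · have hfin : (btwS s (h x) (h y)).Finite := by
      rw [← himg]
      exact (btw_finite hr hxy).image _
    exact (btw_infinite hs hlt hne) hfin
  · have hfin : (btwS s (h y) (h x)).Finite := by
      rw [← himg]
      exact (btw_finite hr (sb_symm hxy)).image _
    exact (btw_infinite hs hlt (fun c => hne (sb_symm c))) hfin

theorem key (hr : IsLinearOrder ℕ r) (hs : IsLinearOrder ℕ s) (h : CC ≃ CC)
    (hiff : ∀ x y : CC, leP r x.val y.val ↔ leP s (h x).val (h y).val) :
    ∀ x, h x = x := by
  have hiff' := hiff_symm h hiff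
  have hslt := hslt_of_hiff hr hs h hiff
  have hsb : ∀ x y : CC, sb x y ↔ sb (h x) (h y) := by
    intro x y
    constructor
    · exact fun hxy => sb_image hr hs h hiff hxy
    · intro hxy
      have := sb_image hs hr h.symm hiff' hxy
      rwa [h.symm_apply_apply, h.symm_apply_apply] at this
  have hblockimg : ∀ x : CC, h '' {z : CC | sb z x} = {z : CC | sb z (h x)} := by
    intro x
    ext w
    constructor
    · rintro ⟨z, hz, rfl⟩
      exact (hsb z x).mp hz
    · intro hw
      refine ⟨h.symm w, ?_, h.apply_symm_apply w⟩
      have := (hsb (h.symm w) x).2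
      apply this
      rwa [h.apply_symm_apply]
  have hcard : ∀ x : CC, (h x).val.1 = x.val.1 ∧ (h x).val.2.1 = x.val.2.1 := by
    intro x
    have hc : ({z : CC | sb z x} : Set CC).ncard = ({z : CC | sb z (h x)} : Set CC).ncard := by
      rw [← hblockimg, Set.ncard_image_of_injective _ h.injective]
    rw [block_ncard, block_ncard] at hc
    obtain ⟨h1, h2⟩ := sz_injective hc
    exact ⟨h1.symm, h2.symm⟩
  have hcard' : ∀ x : CC, (h.symm x).val.1 = x.val.1 ∧ (h.symm x).val.2.1 = x.val.2.1 := by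
    intro x
    have := hcard (h.symm x)
    rw [h.apply_symm_apply] at this
    exact ⟨this.1.symm, this.2.symm⟩
  -- third coordinate
  have hthird : ∀ x : CC, (h x).val.2.2 = x.val.2.2 := by
    intro x0
    set a := x0.val.1 with ha
    set q := x0.val.2.1 with hqd
    set N := sz a q with hN
    let u : Fin N → CC := fun i => ⟨(a, q, i.val), i.isLt⟩
    have hf : ∀ i : Fin N, (h (u i)).val.2.2 < N := by
      intro i
      have hlt := (h (u i)).prop
      rw [(hcard (u i)).1, (hcard (u i)).2] at hlt
      exact hlt
    have hf' : ∀ i : Fin N, (h.symm (u i)).val.2.2 < N := by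
      intro i
      have hlt := (h.symm (u i)).prop
      rw [(hcard' (u i)).1, (hcard' (u i)).2] at hlt
      exact hlt
    let f : Fin N → Fin N := fun i => ⟨(h (u i)).val.2.2, hf i⟩
    let f' : Fin N → Fin N := fun i => ⟨(h.symm (u i)).val.2.2, hf' i⟩
    have hmono : StrictMono f := by
      intro i j hij
      have h1 : slt r (u i).val (u j).val := Or.inr ⟨rfl, Or.inr ⟨rfl, hij⟩⟩
      have h2 := (hslt (u i) (u j)).mp h1
      rcases h2 with h2 | ⟨e2, l2⟩
      · rw [(hcard (u i)).1, (hcard (u j)).1] at h2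
        exact absurd rfl h2.2
      · rcases l2 with l2 | ⟨f2, l2⟩
        · rw [(hcard (u i)).2, (hcard (u j)).2] at l2
          exact absurd l2 (lt_irrefl _)
        · exact l2
    have hmono' : StrictMono f' := by
      intro i j hij
      have hslt' := hslt_of_hiff hs hr h.symm hiff'
      have h1 : slt s (u i).val (u j).val := Or.inr ⟨rfl, Or.inr ⟨rfl, hij⟩⟩
      have h2 := (hslt' (u i) (u j)).mp h1
      rcases h2 with h2 | ⟨e2, l2⟩
      · rw [(hcard' (u i)).1, (hcard' (u j)).1] at h2
        exact absurd rfl h2.2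
      · rcases l2 with l2 | ⟨f2, l2⟩
        · rw [(hcard' (u i)).2, (hcard' (u j)).2] at l2
          exact absurd l2 (lt_irrefl _)
        · exact l2
    have hcomp : ∀ i : Fin N, f' (f i) = i := by
      intro i
      have hu : u (f i) = h (u i) := by
        apply Subtype.ext
        show (a, q, (h (u i)).val.2.2) = (h (u i)).val
        exact Prod.ext_iff.mpr ⟨(hcard (u i)).1.symm,
          Prod.ext_iff.mpr ⟨(hcard (u i)).2.symm, rfl⟩⟩
      apply Fin.ext
      show (h.symm (u (f i))).val.2.2 = i.val
      rw [hu, h.symm_apply_apply]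
    have hfix : ∀ i : Fin N, f i = i := by
      intro i
      have h1 : i.val ≤ (f i).val := le_apply_fin hmono i
      have h2 : (f i).val ≤ (f' (f i)).val := le_apply_fin hmono' (f i)
      rw [hcomp i] at h2
      exact Fin.ext (le_antisymm h2 h1)
    -- finish: x0 = u ⟨x0.val.2.2, _⟩
    have hx0 : x0 = u ⟨x0.val.2.2, x0.prop⟩ := by
      apply Subtype.ext
      exact (Prod.ext_iff.mpr ⟨rfl, Prod.ext_iff.mpr ⟨rfl, rfl⟩⟩).symm
    have := congrArg Fin.val (hfix ⟨x0.val.2.2, x0.prop⟩)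
    rw [hx0]
    exact this
  intro x
  apply Subtype.ext
  exact Prod.ext_iff.mpr ⟨(hcard x).1, Prod.ext_iff.mpr ⟨(hcard x).2, hthird x⟩⟩

end transfer


/-! ### The order `FF r` on ℕ -/

noncomputable def FF (r : ℕ → ℕ → Prop) : ℕ → ℕ → Prop :=
  fun m n => leP r (eC m).val (eC n).val

lemma FF_linear {r : ℕ → ℕ → Prop} (hr : IsLinearOrder ℕ r) : IsLinearOrder ℕ (FF r) := by
  exact { refl := fun a => leP_refl _,
          trans := fun a b c h1 h2 => leP_trans hr h1 h2,
          antisymm := fun a b h1 h2 => eC.injective (Subtype.ext (leP_antisymm hr h1 h2)),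
          total := fun a b => leP_total hr _ _ }

lemma FF_rigid {r : ℕ → ℕ → Prop} (hr : IsLinearOrder ℕ r) (g : FF r ≃r FF r) :
    ∀ m, g m = m := by
  let h : CC ≃ CC := (eC.symm.trans g.toEquiv).trans eC
  have hiff : ∀ x y : CC, leP r x.val y.val ↔ leP r (h x).val (h y).val := by
    intro x y
    constructor
    · intro hxy
      have hab : FF r (eC.symm x) (eC.symm y) := by
        show leP r (eC (eC.symm x)).val (eC (eC.symm y)).val
        rwa [eC.apply_symm_apply, eC.apply_symm_apply]
      exact g.map_rel_iff.mpr hab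
    · intro hxy
      have hab : FF r (eC.symm x) (eC.symm y) := g.map_rel_iff.mp hxy
      have : leP r (eC (eC.symm x)).val (eC (eC.symm y)).val := hab
      rwa [eC.apply_symm_apply, eC.apply_symm_apply] at this
  have hk := key hr hr h hiff
  intro m
  have h1 := hk (eC m)
  have h2 : eC (g m) = eC m := by
    have : h (eC m) = eC (g m) := by
      show eC (g (eC.symm (eC m))) = eC (g m)
      rw [eC.symm_apply_apply]
    rw [← this, h1]
  exact eC.injective h2

lemma leP_pair {r : ℕ → ℕ → Prop} (hr : IsLinearOrder ℕ r) (a b : ℕ) :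
    leP r ((a, 0, 0) : PP) ((b, 0, 0) : PP) ↔ r a b := by
  constructor
  · rintro (he | h)
    · have : a = b := congrArg Prod.fst he
      rw [this]; exact r_refl hr b
    · rcases h with h | ⟨e, (h | ⟨-, h⟩)⟩
      · exact h.1
      · exact absurd h (lt_irrefl _)
      · exact absurd h (lt_irrefl _)
  · intro hab
    by_cases he : a = b
    · subst he; exact Or.inl rfl
    · exact Or.inr (Or.inl ⟨hab, he⟩)

lemma FF_recov {r s : ℕ → ℕ → Prop} (hr : IsLinearOrder ℕ r) (hs : IsLinearOrder ℕ s)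
    (j : FF r ≃r FF s) : ∀ a b, r a b ↔ s a b := by
  let h : CC ≃ CC := (eC.symm.trans j.toEquiv).trans eC
  have hiff : ∀ x y : CC, leP r x.val y.val ↔ leP s (h x).val (h y).val := by
    intro x y
    constructor
    · intro hxy
      have hab : FF r (eC.symm x) (eC.symm y) := by
        show leP r (eC (eC.symm x)).val (eC (eC.symm y)).val
        rwa [eC.apply_symm_apply, eC.apply_symm_apply]
      exact j.map_rel_iff.mpr hab
    · intro hxy
      have hab : FF r (eC.symm x) (eC.symm y) := j.map_rel_iff.mp hxy
      have : leP r (eC (eC.symm x)).val (eC (eC.symm y)).val := hab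
      rwa [eC.apply_symm_apply, eC.apply_symm_apply] at this
  have hk := key hr hs h hiff
  have hlePiff : ∀ x y : CC, leP r x.val y.val ↔ leP s x.val y.val := by
    intro x y
    have := hiff x y
    rwa [hk x, hk y] at this
  intro a b
  have := hlePiff ⟨(a, 0, 0), sz_pos a 0⟩ ⟨(b, 0, 0), sz_pos b 0⟩
  rwa [leP_pair hr, leP_pair hs] at this

/-! ### Indivisibility -/

lemma exists_dense_color (c' : ℚ → Bool) :
    ∃ (b : Bool) (u v : ℚ), u < v ∧
      ∀ x y : ℚ, u ≤ x → x < y → y ≤ v → ∃ z, x < z ∧ z < y ∧ c' z = b := by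
  by_cases H : ∀ x y : ℚ, x < y → ∃ z, x < z ∧ z < y ∧ c' z = true
  · exact ⟨true, 0, 1, by norm_num, fun x y _ hxy _ => H x y hxy⟩
  · push_neg at H
    obtain ⟨x0, y0, hxy0, hno⟩ := H
    refine ⟨false, x0, y0, hxy0, ?_⟩
    intro x y hx hxy hy
    obtain ⟨z, hz1, hz2⟩ := exists_between hxy
    refine ⟨z, hz1, hz2, ?_⟩
    have h1 : x0 < z := lt_of_le_of_lt hx hz1
    have h2 : z < y0 := lt_of_lt_of_le hz2 hy
    have := hno z h1 h2
    simpa using this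

def W (r : ℕ → ℕ → Prop) : Type := ℕ

instance (r : ℕ → ℕ → Prop) : Countable (W r) := (inferInstance : Countable ℕ)

noncomputable def WLO (r : ℕ → ℕ → Prop) (hr : IsLinearOrder ℕ r) : LinearOrder (W r) where
  le m n := FF r m n
  le_refl m := leP_refl _
  le_trans a b c h1 h2 := leP_trans hr h1 h2
  le_antisymm a b h1 h2 := eC.injective (Subtype.ext (leP_antisymm hr h1 h2))
  le_total a b := leP_total hr _ _
  toDecidableLE := Classical.decRel _

lemma leP_pairq {r : ℕ → ℕ → Prop} (qm qn : ℚ) :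
    leP r ((0, qm, 0) : PP) ((0, qn, 0) : PP) ↔ qm ≤ qn := by
  constructor
  · rintro (he | h)
    · have : qm = qn := congrArg (fun z : PP => z.2.1) he
      exact le_of_eq this
    · rcases h with h | ⟨-, (h | ⟨e, h⟩)⟩
      · exact absurd rfl h.2
      · exact le_of_lt h
      · exact le_of_eq e
  · intro hle
    rcases lt_or_eq_of_le hle with h | h
    · exact Or.inr (Or.inr ⟨rfl, Or.inl h⟩)
    · rw [h]; exact Or.inl rfl


lemma FF_symIndiv {r : ℕ → ℕ → Prop} (hr : IsLinearOrder ℕ r) : SymIndivRel (FF r) := by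
  intro c
  set c' : ℚ → Bool := fun q => c (eC.symm ⟨(0, q, 0), sz_pos 0 q⟩) with hc'
  obtain ⟨b, u, v, huv, hP⟩ := exists_dense_color c'
  letI : LinearOrder (W r) := WLO r hr
  let B := {q : ℚ // u < q ∧ q < v ∧ c' q = b}
  haveI : Nonempty B := by
    obtain ⟨z, h1, h2, h3⟩ := hP u v le_rfl huv le_rfl
    exact ⟨⟨z, h1, h2, h3⟩⟩
  haveI : DenselyOrdered B := by
    constructor
    rintro ⟨z1, hz1⟩ ⟨z2, hz2⟩ h12
    rw [Subtype.mk_lt_mk] at h12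
    obtain ⟨z, ha, hb2, hcz⟩ := hP z1 z2 (le_of_lt hz1.1) h12 (le_of_lt hz2.2.1)
    exact ⟨⟨z, lt_trans hz1.1 ha, lt_trans hb2 hz2.2.1, hcz⟩,
      Subtype.mk_lt_mk.mpr ha, Subtype.mk_lt_mk.mpr hb2⟩
  haveI : Nontrivial B := by
    obtain ⟨z, h1, h2, h3⟩ := hP u v le_rfl huv le_rfl
    obtain ⟨z2, ha, hb2, hcz⟩ := hP z v (le_of_lt h1) h2 le_rfl
    refine ⟨⟨z, h1, h2, h3⟩, ⟨z2, lt_trans h1 ha, hb2, hcz⟩, ?_⟩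
    intro he
    rw [Subtype.mk_eq_mk] at he
    rw [he] at ha
    exact lt_irrefl _ ha
  obtain ⟨emb⟩ := Order.embedding_from_countable_to_dense (α := W r) (β := B)
  let e0 : ℕ → ℕ := fun m => eC.symm ⟨(0, (emb m).val, 0), sz_pos 0 (emb m).val⟩
  have hinj : Function.Injective e0 := by
    intro m n h
    have h2 := eC.symm.injective h
    have h3 : (emb m).val = (emb n).val := by
      have := congrArg (fun z : CC => z.val.2.1) h2
      simpa using this
    exact emb.injective (Subtype.ext h3)
  have hiff : ∀ m n : ℕ, FF r (e0 m) (e0 n) ↔ FF r m n := by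
    intro m n
    have h1 : FF r (e0 m) (e0 n) ↔
        leP r ((0, (emb m).val, 0) : PP) ((0, (emb n).val, 0) : PP) := by
      show leP r (eC (eC.symm _)).val (eC (eC.symm _)).val ↔ _
      rw [eC.apply_symm_apply, eC.apply_symm_apply]
    rw [h1, leP_pairq]
    constructor
    · intro hle
      exact emb.map_rel_iff.mp (show emb m ≤ emb n from hle)
    · intro hle
      exact (show emb m ≤ emb n from emb.map_rel_iff.mpr hle)
  refine ⟨⟨⟨e0, hinj⟩, fun {m n} => hiff m n⟩, ?_, ?_⟩
  · intro g
    refine ⟨g, fun x => ?_⟩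
    show g (e0 x) = e0 (g x)
    rw [FF_rigid hr g (e0 x), FF_rigid hr g x]
  · intro x y
    show c (e0 x) = c (e0 y)
    have hx : c (e0 x) = b := (emb x).prop.2.2
    have hy : c (e0 y) = b := (emb y).prop.2.2
    rw [hx, hy]

end SymIndivProof

theorem exists_injective_map_to_symIndiv_linearOrders :
    ∃ F : (ℕ → ℕ → Prop) → (ℕ → ℕ → Prop),
      (∀ r : ℕ → ℕ → Prop, IsLinearOrder ℕ r → IsLinearOrder ℕ (F r)) ∧
      (∀ r : ℕ → ℕ → Prop, IsLinearOrder ℕ r → SymIndivRel (F r)) ∧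
      ∀ r s : ℕ → ℕ → Prop, IsLinearOrder ℕ r → IsLinearOrder ℕ s →
        Nonempty (F r ≃r F s) → Nonempty (r ≃r s) := by
  refine ⟨SymIndivProof.FF, fun r hr => SymIndivProof.FF_linear hr,
    fun r hr => SymIndivProof.FF_symIndiv hr, ?_⟩
  rintro r s hr hs ⟨j⟩
  have h := SymIndivProof.FF_recov hr hs j
  exact ⟨⟨Equiv.refl ℕ, fun {a b} => (h a b).symm⟩⟩
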